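/- arXiv:2311.12938 — 4 statements merged into one kernel-verified Lean document; each statement's English description precedes it below -/
import Mathlib

section
/- In the permutational wreath product G = H ≀_X F, where F acts transitively on X with base point y₀, generated by {(δ_s^{y₀}, 1_F) : s ∈ S} ∪ {(1, t) : t ∈ T}, if an element g = (k, f) has k(x) ≠ 1 for some x ∈ X, then the word length of g in G is at least d_X(x, y₀), where d_X(x, y) = min{|f|_T : f ∈ F, f·x = y}. -/
/-- The action of `F` on `X → H` induced by an action of `F` on `X`:
`(f • k) x = k (f⁻¹ • x)`. -/
def wreathAct (F X H : Type*) [Group F] [Group H] [MulAction F X] :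
    F →* MulAut (X → H) where
  toFun f :=
    { toFun := fun k x => k (f⁻¹ • x)
      invFun := fun k x => k (f • x)
      left_inv := fun k => by funext x; simp
      right_inv := fun k => by funext x; simp
      map_mul' := fun k k' => rfl }
  map_one' := by ext k x; simp
  map_mul' f g := by ext k x; simp [mul_smul]

/-- The (unrestricted) permutational wreath product `H ≀_X F` as `(X → H) ⋊ F`. -/
abbrev PermWreathProduct (H : Type*) (X : Type*) (F : Type*)
    [Group H] [Group F] [MulAction F X] :=
  SemidirectProduct (X → H) F (wreathAct F X H)

/-- In `G = H ≀_X F` with `F` acting transitively on `X`, base point `y₀`, and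
generating set `{(δ_s^{y₀}, 1) : s ∈ S} ∪ {(1, t) : t ∈ T}`: if `g = (k, f)` has
`k x ≠ 1` for some `x ∈ X`, then every word in the generators representing `g` has
length at least `d_X(x, y₀) = min {|f|_T : f • x = y₀}`; i.e. there is a word in `T`
of length at most that of the given word whose product moves `x` to `y₀`. -/
theorem permWreath_length_ge_lamp_dist {H X F : Type*} [Group H] [Group F]
    [MulAction F X] [DecidableEq X]
    (htrans : MulAction.IsPretransitive F X) (y₀ : X)
    (S : Set H) (T : Set F) (hSfin : S.Finite) (hTfin : T.Finite)
    (hSsym : ∀ s ∈ S, s⁻¹ ∈ S) (hTsym : ∀ t ∈ T, t⁻¹ ∈ T)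
    (hSgen : Subgroup.closure S = ⊤) (hTgen : Subgroup.closure T = ⊤)
    (gens : Set (PermWreathProduct H X F))
    (hgens : gens = {g | ∃ s ∈ S, g = ⟨Pi.mulSingle y₀ s, 1⟩} ∪
                    {g | ∃ t ∈ T, g = ⟨1, t⟩})
    (k : X → H) (f : F) (x : X) (hx : k x ≠ 1)
    (l : List (PermWreathProduct H X F)) (hl : ∀ w ∈ l, w ∈ gens)
    (hprod : l.prod = ⟨k, f⟩) :
    ∃ lf : List F, (∀ u ∈ lf, u ∈ T) ∧ lf.prod • x = y₀ ∧ lf.length ≤ l.length := by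
  subst hgens
  induction l generalizing k f x with
  | nil =>
    exfalso
    apply hx
    have : (1 : PermWreathProduct H X F).left = k := congrArg SemidirectProduct.left hprod
    rw [← this]
    rfl
  | cons a rest ih =>
    have ha : a ∈ _ := hl a List.mem_cons_self
    have hrest : ∀ w ∈ rest, w ∈ _ := fun w hw => hl w (List.mem_cons_of_mem a hw)
    have hk : (a * rest.prod).left = k := by
      rw [← List.prod_cons, hprod]
    rcases ha with ⟨s, hs, rfl⟩ | ⟨t, ht, rfl⟩
    · by_cases hxy : x = y₀
      · exact ⟨[], by simp, by simp [hxy], by simp⟩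
      · have hk' : rest.prod.left x ≠ 1 := by
          have : k x = (Pi.mulSingle y₀ s : X → H) x * rest.prod.left x := by
            rw [← hk, SemidirectProduct.mul_left]
            simp [SemidirectProduct.mul_left, wreathAct]
          rw [show (Pi.mulSingle y₀ s : X → H) x = 1 from Pi.mulSingle_eq_of_ne (M := fun _ => H) hxy s, one_mul] at this
          rw [← this]; exact hx
        obtain ⟨lf, hlf1, hlf2, hlf3⟩ := ih rest.prod.left rest.prod.right x hk' rfl hrest
        exact ⟨lf, hlf1, hlf2, hlf3.trans (by simp)⟩
    · have hk' : rest.prod.left (t⁻¹ • x) ≠ 1 := by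
        have : k x = rest.prod.left (t⁻¹ • x) := by
          rw [← hk, SemidirectProduct.mul_left]
          simp [SemidirectProduct.mul_left, wreathAct]
        rw [← this]; exact hx
      obtain ⟨lf, hlf1, hlf2, hlf3⟩ := ih rest.prod.left rest.prod.right (t⁻¹ • x) hk' rfl hrest
      refine ⟨lf ++ [t⁻¹], ?_, ?_, ?_⟩
      · intro u hu
        rcases List.mem_append.mp hu with h | h
        · exact hlf1 u h
        · simp at h; subst h; exact hTsym t ht
      · rw [List.prod_append, List.prod_singleton, mul_smul]
        exact hlf2
      · simp only [List.length_append, List.length_cons, List.length_singleton, List.length_nil]; omega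
end

section
/- For any two vertices x₁x₂ and y₁y₂ of the Diestel-Leader graph DL(p,q), the graph distance satisfies dist(x₁x₂, y₁y₂) = d₁(x₁,y₁) + d₂(x₂,y₂) − |h₁(y₁) − h₁(x₁)|, where dᵢ is the tree metric on 𝕋ᵢ and hᵢ is the Busemann function on 𝕋ᵢ. -/
/-- A homogeneous tree with a Busemann (height) function `h` towards a fixed end:
the graph is connected and acyclic, every edge changes the height by exactly `1`,
every vertex has a unique neighbour of smaller height (its parent) and exactly `d`
neighbours of larger height (its children). -/
structure BusemannTree {V : Type*} (G : SimpleGraph V) (h : V → ℤ) (d : ℕ) : Prop where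
  connected : G.Connected
  acyclic : G.IsAcyclic
  height_adj : ∀ x y, G.Adj x y → h y = h x + 1 ∨ h y = h x - 1
  parent_unique : ∀ x, ∃! y, G.Adj x y ∧ h y = h x - 1
  children_card : ∀ x, {y | G.Adj x y ∧ h y = h x + 1}.ncard = d

/-- The Diestel--Leader graph: the horocyclic product of two trees. -/
def DLGraph {V₁ V₂ : Type*} (G₁ : SimpleGraph V₁) (G₂ : SimpleGraph V₂)
    (h₁ : V₁ → ℤ) (h₂ : V₂ → ℤ) :
    SimpleGraph {v : V₁ × V₂ // h₁ v.1 + h₂ v.2 = 0} where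
  Adj a b := G₁.Adj a.1.1 b.1.1 ∧ G₂.Adj a.1.2 b.1.2
  symm := ⟨fun _ _ hab => ⟨hab.1.symm, hab.2.symm⟩⟩
  loopless := ⟨fun _ hab => G₁.irrefl hab.1⟩

namespace DLProof

open SimpleGraph Function

variable {V : Type*} {G : SimpleGraph V} {h : V → ℤ} {d : ℕ}

/-- The parent map of a Busemann tree. -/
noncomputable def pa (hT : BusemannTree G h d) (x : V) : V :=
  (hT.parent_unique x).exists.choose

lemma pa_adj (hT : BusemannTree G h d) (x : V) : G.Adj x (pa hT x) :=
  (hT.parent_unique x).exists.choose_spec.1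

lemma h_pa (hT : BusemannTree G h d) (x : V) : h (pa hT x) = h x - 1 :=
  (hT.parent_unique x).exists.choose_spec.2

lemma pa_eq (hT : BusemannTree G h d) {x y : V} (ha : G.Adj x y) (hh : h y = h x - 1) :
    y = pa hT x :=
  (hT.parent_unique x).unique ⟨ha, hh⟩ ⟨pa_adj hT x, h_pa hT x⟩

lemma h_pa_iter (hT : BusemannTree G h d) (k : ℕ) (x : V) :
    h ((pa hT)^[k] x) = h x - k := by
  induction k with
  | zero => simp
  | succ k ih =>
    rw [Function.iterate_succ_apply', h_pa hT, ih]
    push_cast; ring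

lemma exists_up (hT : BusemannTree G h d) (hd : d ≠ 0) (k : ℕ) (x : V) :
    ∃ z, (pa hT)^[k] z = x := by
  induction k with
  | zero => exact ⟨x, rfl⟩
  | succ k ih =>
    obtain ⟨z, hz⟩ := ih
    have hne : ({y | G.Adj z y ∧ h y = h z + 1} : Set V).Nonempty :=
      Set.nonempty_of_ncard_ne_zero (by rw [hT.children_card z]; exact hd)
    obtain ⟨w, hw1, hw2⟩ := hne
    have hpw : pa hT w = z := (pa_eq hT hw1.symm (by omega)).symm
    exact ⟨w, by rw [Function.iterate_succ_apply, hpw, hz]⟩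

/-- Meet structure along a path: the path descends to the meet, then ascends. -/
lemma path_meet (hT : BusemannTree G h d) {x y : V} (P : G.Walk x y) (hP : P.IsPath) :
    ∃ a b : ℕ, (pa hT)^[a] x = (pa hT)^[b] y ∧ P.length = a + b ∧
      ∀ i ≤ a, (pa hT)^[i] x ∈ P.support := by
  induction P with
  | nil => exact ⟨0, 0, rfl, rfl, by intro i hi; interval_cases i; simp⟩
  | @cons u u' w hadj P ih =>
    rw [SimpleGraph.Walk.cons_isPath_iff] at hP
    obtain ⟨a', b', hm, hlen, hsup⟩ := ih hP.1
    rcases hT.height_adj u u' hadj with hup | hdown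
    · -- first step goes up: h u' = h u + 1, so u = pa u'
      have hu : u = pa hT u' := pa_eq hT hadj.symm (by omega)
      match a', hm, hsup with
      | 0, hm, hsup =>
        refine ⟨0, b' + 1, ?_, by simp [hlen], ?_⟩
        · simp only [Function.iterate_zero_apply] at hm ⊢
          rw [Function.iterate_succ_apply', ← hm, ← hu]
        · intro i hi; interval_cases i; simp
      | (a'' + 1), hm, hsup =>
        exfalso
        have h1 : (pa hT)^[1] u' ∈ P.support := hsup 1 (by omega)
        rw [Function.iterate_one, ← hu] at h1
        exact hP.2 h1
    · -- first step goes down: u' = pa u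
      have hu : u' = pa hT u := pa_eq hT hadj hdown
      refine ⟨a' + 1, b', ?_, by simp [hlen]; omega, ?_⟩
      · rw [Function.iterate_succ_apply, ← hu, hm]
      · intro i hi
        match i with
        | 0 => simp
        | (j + 1) =>
          rw [Function.iterate_succ_apply, ← hu, SimpleGraph.Walk.support_cons]
          exact List.mem_cons_of_mem _ (hsup j (by omega))

/-- The meet of two vertices: both descend to it, the tree distance is the sum of the two
descent lengths, and every walk between the two vertices visits the meet. -/
lemma meet_spec (hT : BusemannTree G h d) (x y : V) :
    ∃ (a b : ℕ) (m : V), (pa hT)^[a] x = m ∧ (pa hT)^[b] y = m ∧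
      G.dist x y = a + b ∧ ∀ W : G.Walk x y, m ∈ W.support := by
  classical
  obtain ⟨W0⟩ := hT.connected.preconnected x y
  obtain ⟨a, b, hm, hlen, hsup⟩ := path_meet hT W0.bypass W0.bypass_isPath
  have huniq : ∀ W : G.Walk x y, W0.bypass = W.bypass := by
    intro W
    have := hT.acyclic.path_unique ⟨W0.bypass, W0.bypass_isPath⟩ ⟨W.bypass, W.bypass_isPath⟩
    exact congrArg Subtype.val this
  refine ⟨a, b, (pa hT)^[a] x, rfl, hm.symm, ?_, ?_⟩
  · refine le_antisymm (hlen ▸ SimpleGraph.dist_le W0.bypass) ?_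
    obtain ⟨W, hW⟩ := (hT.connected.preconnected x y).exists_walk_length_eq_dist
    calc a + b = W0.bypass.length := hlen.symm
      _ = W.bypass.length := by rw [huniq W]
      _ ≤ W.length := W.length_bypass_le
      _ = G.dist x y := hW
  · intro W
    have h1 : (pa hT)^[a] x ∈ W.bypass.support := huniq W ▸ hsup a le_rfl
    exact W.support_bypass_subset h1

/-- Steps of a `±1` sequence: distance bound. -/
lemma pm_bound (f : ℕ → ℤ) (n : ℕ)
    (hstep : ∀ t, t < n → f (t + 1) = f t + 1 ∨ f (t + 1) = f t - 1) :
    ∀ k i, i + k ≤ n → |f (i + k) - f i| ≤ (k : ℤ) := by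
  intro k
  induction k with
  | zero => intro i _; simp
  | succ k ih =>
    intro i hik
    have h1 := ih i (by omega)
    have h2 := hstep (i + k) (by omega)
    have h3 : |f (i + k + 1) - f (i + k)| ≤ 1 := by
      rcases h2 with h | h <;> rw [h] <;> simp
    have h4 := abs_sub_le (f (i + k + 1)) (f (i + k)) (f i)
    have : i + (k + 1) = (i + k) + 1 := by omega
    rw [this]
    push_cast
    linarith

/-- Key lower bound for a `±1` sequence that must dip by `A` and rise by `B`. -/
lemma key_lb (f : ℕ → ℤ) (n : ℕ)
    (hstep : ∀ t, t < n → f (t + 1) = f t + 1 ∨ f (t + 1) = f t - 1)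
    (A B : ℕ) (s t : ℕ) (hs : s ≤ n) (ht : t ≤ n)
    (hfs : f s = f 0 - A) (hft : f t = f 0 + B) :
    2 * (A : ℤ) + 2 * B - |f n - f 0| ≤ n := by
  have habs1 := le_abs_self (f n - f 0)
  have habs2 := neg_abs_le (f n - f 0)
  rcases le_total s t with hst | hts
  · have b1 := pm_bound f n hstep s 0 (by omega)
    have b2 := pm_bound f n hstep (t - s) s (by omega)
    have b3 := pm_bound f n hstep (n - t) t (by omega)
    rw [Nat.zero_add] at b1
    rw [show s + (t - s) = t by omega] at b2
    rw [show t + (n - t) = n by omega] at b3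
    have c1 := (abs_le.mp b1).1
    have c2 := (abs_le.mp b2).2
    have c3 := (abs_le.mp b3).1
    have e2 : ((t - s : ℕ) : ℤ) = (t : ℤ) - s := by omega
    have e3 : ((n - t : ℕ) : ℤ) = (n : ℤ) - t := by omega
    rw [e2] at c2; rw [e3] at c3
    linarith
  · have b1 := pm_bound f n hstep t 0 (by omega)
    have b2 := pm_bound f n hstep (s - t) t (by omega)
    have b3 := pm_bound f n hstep (n - s) s (by omega)
    rw [Nat.zero_add] at b1
    rw [show t + (s - t) = s by omega] at b2
    rw [show s + (n - s) = n by omega] at b3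
    have c1 := (abs_le.mp b1).2
    have c2 := (abs_le.mp b2).1
    have c3 := (abs_le.mp b3).2
    have e2 : ((s - t : ℕ) : ℤ) = (s : ℤ) - t := by omega
    have e3 : ((n - s : ℕ) : ℤ) = (n : ℤ) - s := by omega
    rw [e2] at c2; rw [e3] at c3
    linarith

lemma getVert_map {V W : Type*} {G : SimpleGraph V} {G' : SimpleGraph W} (f : G →g G')
    {u v : V} (p : G.Walk u v) (i : ℕ) : (p.map f).getVert i = f (p.getVert i) := by
  induction p generalizing i with
  | nil => simp [SimpleGraph.Walk.getVert]
  | cons h p ih =>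
    cases i with
    | zero => simp [SimpleGraph.Walk.getVert]
    | succ i => simpa [SimpleGraph.Walk.getVert] using ih i

section DL

variable {V₁ V₂ : Type*} {G₁ : SimpleGraph V₁} {G₂ : SimpleGraph V₂}
  {h₁ : V₁ → ℤ} {h₂ : V₂ → ℤ} {p q : ℕ}

/-- Synchronized phase: descend `k` steps in the first tree while ascending `k` steps
in the second tree. -/
lemma phaseA (hT₁ : BusemannTree G₁ h₁ p) (hT₂ : BusemannTree G₂ h₂ q) :
    ∀ (k : ℕ) (u w : {v : V₁ × V₂ // h₁ v.1 + h₂ v.2 = 0}),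
      w.1.1 = (pa hT₁)^[k] u.1.1 → (pa hT₂)^[k] w.1.2 = u.1.2 →
      ∃ W : (DLGraph G₁ G₂ h₁ h₂).Walk u w, W.length = k := by
  intro k
  induction k with
  | zero =>
    intro u w h1 h2
    simp only [Function.iterate_zero_apply] at h1 h2
    have : u = w := Subtype.ext (Prod.ext h1.symm h2.symm)
    subst this
    exact ⟨SimpleGraph.Walk.nil, rfl⟩
  | succ k ih =>
    intro u w h1 h2
    have hc2pa : pa hT₂ ((pa hT₂)^[k] w.1.2) = u.1.2 :=
      (Function.iterate_succ_apply' _ k _).symm.trans h2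
    have pf : h₁ (pa hT₁ u.1.1) + h₂ ((pa hT₂)^[k] w.1.2) = 0 := by
      have e1 : h₁ (pa hT₁ u.1.1) = h₁ u.1.1 - 1 := h_pa hT₁ _
      have e2 : h₂ (pa hT₂ ((pa hT₂)^[k] w.1.2)) = h₂ ((pa hT₂)^[k] w.1.2) - 1 := h_pa hT₂ _
      have := u.2
      rw [hc2pa] at e2
      omega
    set c : {v : V₁ × V₂ // h₁ v.1 + h₂ v.2 = 0} :=
      ⟨(pa hT₁ u.1.1, (pa hT₂)^[k] w.1.2), pf⟩ with hc
    have hadj : (DLGraph G₁ G₂ h₁ h₂).Adj u c := by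
      refine ⟨pa_adj hT₁ u.1.1, ?_⟩
      have := pa_adj hT₂ ((pa hT₂)^[k] w.1.2)
      rw [hc2pa] at this
      exact this.symm
    have hc1 : w.1.1 = (pa hT₁)^[k] c.1.1 := by
      rw [h1, Function.iterate_succ_apply]
    obtain ⟨W, hW⟩ := ih c w hc1 rfl
    exact ⟨SimpleGraph.Walk.cons hadj W, by simp [hW]⟩

/-- Synchronized phase: ascend `k` steps in the first tree while descending `k` steps
in the second tree. -/
lemma phaseB (hT₁ : BusemannTree G₁ h₁ p) (hT₂ : BusemannTree G₂ h₂ q) :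
    ∀ (k : ℕ) (u w : {v : V₁ × V₂ // h₁ v.1 + h₂ v.2 = 0}),
      (pa hT₁)^[k] w.1.1 = u.1.1 → w.1.2 = (pa hT₂)^[k] u.1.2 →
      ∃ W : (DLGraph G₁ G₂ h₁ h₂).Walk u w, W.length = k := by
  intro k
  induction k with
  | zero =>
    intro u w h1 h2
    simp only [Function.iterate_zero_apply] at h1 h2
    have : u = w := Subtype.ext (Prod.ext h1.symm h2.symm)
    subst this
    exact ⟨SimpleGraph.Walk.nil, rfl⟩
  | succ k ih =>
    intro u w h1 h2
    have hc1pa : pa hT₁ ((pa hT₁)^[k] w.1.1) = u.1.1 :=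
      (Function.iterate_succ_apply' _ k _).symm.trans h1
    have pf : h₁ ((pa hT₁)^[k] w.1.1) + h₂ (pa hT₂ u.1.2) = 0 := by
      have e1 : h₂ (pa hT₂ u.1.2) = h₂ u.1.2 - 1 := h_pa hT₂ _
      have e2 : h₁ (pa hT₁ ((pa hT₁)^[k] w.1.1)) = h₁ ((pa hT₁)^[k] w.1.1) - 1 := h_pa hT₁ _
      have := u.2
      rw [hc1pa] at e2
      omega
    set c : {v : V₁ × V₂ // h₁ v.1 + h₂ v.2 = 0} :=
      ⟨((pa hT₁)^[k] w.1.1, pa hT₂ u.1.2), pf⟩ with hc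
    have hadj : (DLGraph G₁ G₂ h₁ h₂).Adj u c := by
      refine ⟨?_, pa_adj hT₂ u.1.2⟩
      have := pa_adj hT₁ ((pa hT₁)^[k] w.1.1)
      rw [hc1pa] at this
      exact this.symm
    have hc2 : w.1.2 = (pa hT₂)^[k] c.1.2 := by
      rw [h2, Function.iterate_succ_apply]
    obtain ⟨W, hW⟩ := ih c w rfl hc2
    exact ⟨SimpleGraph.Walk.cons hadj W, by simp [hW]⟩

end DL

end DLProof

/-- Distance formula in `DL(p,q)`:
`dist(x₁x₂, y₁y₂) = d₁(x₁,y₁) + d₂(x₂,y₂) − |h₁(y₁) − h₁(x₁)|`. -/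
theorem DL_dist_formula {V₁ V₂ : Type*} (G₁ : SimpleGraph V₁) (G₂ : SimpleGraph V₂)
    (h₁ : V₁ → ℤ) (h₂ : V₂ → ℤ) (p q : ℕ) (hp : 2 ≤ p) (hq : 2 ≤ q)
    (hT₁ : BusemannTree G₁ h₁ p) (hT₂ : BusemannTree G₂ h₂ q)
    (a b : {v : V₁ × V₂ // h₁ v.1 + h₂ v.2 = 0}) :
    ((DLGraph G₁ G₂ h₁ h₂).dist a b : ℤ) =
      (G₁.dist a.1.1 b.1.1 : ℤ) + (G₂.dist a.1.2 b.1.2 : ℤ)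
        - |h₁ b.1.1 - h₁ a.1.1| := by
  classical
  open DLProof Function SimpleGraph in
  obtain ⟨a₁, b₁, m₁, hma1, hmb1, hd₁, hsup₁⟩ := DLProof.meet_spec hT₁ a.1.1 b.1.1
  obtain ⟨a₂, b₂, m₂, hma2, hmb2, hd₂, hsup₂⟩ := DLProof.meet_spec hT₂ a.1.2 b.1.2
  have hm1a : h₁ m₁ = h₁ a.1.1 - a₁ := hma1 ▸ DLProof.h_pa_iter hT₁ a₁ a.1.1
  have hm1b : h₁ m₁ = h₁ b.1.1 - b₁ := hmb1 ▸ DLProof.h_pa_iter hT₁ b₁ b.1.1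
  have hm2a : h₂ m₂ = h₂ a.1.2 - a₂ := hma2 ▸ DLProof.h_pa_iter hT₂ a₂ a.1.2
  have hm2b : h₂ m₂ = h₂ b.1.2 - b₂ := hmb2 ▸ DLProof.h_pa_iter hT₂ b₂ b.1.2
  have ha0 := a.2
  have hb0 := b.2
  have hbalZ : (a₁ : ℤ) + a₂ = b₁ + b₂ := by omega
  have hbal : a₁ + a₂ = b₁ + b₂ := by omega
  have hp0 : p ≠ 0 := by omega
  have hq0 : q ≠ 0 := by omega
  have hΔ : h₁ b.1.1 - h₁ a.1.1 = (b₁ : ℤ) - a₁ := by omega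
  -- Upper bound: construct a walk of the right length.
  have hub : ∃ W : (DLGraph G₁ G₂ h₁ h₂).Walk a b,
      (W.length : ℤ) = 2 * a₁ + 2 * a₂ - |(b₁ : ℤ) - a₁| := by
    rcases le_total a₁ b₁ with hcase | hcase
    · -- ascend-profile: A(a₁), B(a₁+a₂), A(b₂)
      obtain ⟨w₂, hw₂⟩ := DLProof.exists_up hT₂ hq0 a₁ a.1.2
      obtain ⟨w₁, hw₁⟩ := DLProof.exists_up hT₁ hp0 b₂ b.1.1
      have pf1 : h₁ m₁ + h₂ w₂ = 0 := by
        have := DLProof.h_pa_iter hT₂ a₁ w₂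
        rw [hw₂] at this
        omega
      have pf2 : h₁ w₁ + h₂ m₂ = 0 := by
        have := DLProof.h_pa_iter hT₁ b₂ w₁
        rw [hw₁] at this
        omega
      set v1 : {v : V₁ × V₂ // h₁ v.1 + h₂ v.2 = 0} := ⟨(m₁, w₂), pf1⟩ with hv1
      set v2 : {v : V₁ × V₂ // h₁ v.1 + h₂ v.2 = 0} := ⟨(w₁, m₂), pf2⟩ with hv2
      obtain ⟨WA1, hWA1⟩ := DLProof.phaseA hT₁ hT₂ a₁ a v1 hma1.symm hw₂
      obtain ⟨WB, hWB⟩ := DLProof.phaseB hT₁ hT₂ (a₁ + a₂) v1 v2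
        (by
          show (pa hT₁)^[a₁ + a₂] w₁ = m₁
          rw [hbal, Function.iterate_add_apply, hw₁, hmb1])
        (by
          show m₂ = (pa hT₂)^[a₁ + a₂] w₂
          rw [Nat.add_comm a₁ a₂, Function.iterate_add_apply, hw₂, hma2])
      obtain ⟨WA2, hWA2⟩ := DLProof.phaseA hT₁ hT₂ b₂ v2 b hw₁.symm hmb2
      refine ⟨WA1.append (WB.append WA2), ?_⟩
      have : (WA1.append (WB.append WA2)).length = a₁ + (a₁ + a₂) + b₂ := by
        simp [SimpleGraph.Walk.length_append, hWA1, hWB, hWA2]; omega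
      rw [this, abs_of_nonneg (by omega : (0:ℤ) ≤ (b₁ : ℤ) - a₁)]
      push_cast; omega
    · -- descend-profile: B(a₂), A(a₁+a₂), B(b₁)
      obtain ⟨w₁, hw₁⟩ := DLProof.exists_up hT₁ hp0 a₂ a.1.1
      obtain ⟨w₂, hw₂⟩ := DLProof.exists_up hT₂ hq0 b₁ b.1.2
      have pf1 : h₁ w₁ + h₂ m₂ = 0 := by
        have := DLProof.h_pa_iter hT₁ a₂ w₁
        rw [hw₁] at this
        omega
      have pf2 : h₁ m₁ + h₂ w₂ = 0 := by
        have := DLProof.h_pa_iter hT₂ b₁ w₂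
        rw [hw₂] at this
        omega
      set v1 : {v : V₁ × V₂ // h₁ v.1 + h₂ v.2 = 0} := ⟨(w₁, m₂), pf1⟩ with hv1
      set v2 : {v : V₁ × V₂ // h₁ v.1 + h₂ v.2 = 0} := ⟨(m₁, w₂), pf2⟩ with hv2
      obtain ⟨WB1, hWB1⟩ := DLProof.phaseB hT₁ hT₂ a₂ a v1 hw₁ hma2.symm
      obtain ⟨WA, hWA⟩ := DLProof.phaseA hT₁ hT₂ (a₁ + a₂) v1 v2
        (by
          show m₁ = (pa hT₁)^[a₁ + a₂] w₁
          rw [Function.iterate_add_apply, hw₁, hma1])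
        (by
          show (pa hT₂)^[a₁ + a₂] w₂ = m₂
          rw [show a₁ + a₂ = b₂ + b₁ by omega, Function.iterate_add_apply, hw₂, hmb2])
      obtain ⟨WB2, hWB2⟩ := DLProof.phaseB hT₁ hT₂ b₁ v2 b hmb1 hw₂.symm
      refine ⟨WB1.append (WA.append WB2), ?_⟩
      have : (WB1.append (WA.append WB2)).length = a₂ + (a₁ + a₂) + b₁ := by
        simp [SimpleGraph.Walk.length_append, hWB1, hWA, hWB2]; omega
      rw [this, abs_of_nonpos (by omega : (b₁ : ℤ) - a₁ ≤ 0)]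
      push_cast; omega
  obtain ⟨Wup, hWup⟩ := hub
  -- Lower bound: every walk has length at least the target.
  have hlb : ∀ W : (DLGraph G₁ G₂ h₁ h₂).Walk a b,
      2 * (a₁ : ℤ) + 2 * a₂ - |(b₁ : ℤ) - a₁| ≤ W.length := by
    intro W
    set f : ℕ → ℤ := fun t => h₁ ((W.getVert t).1.1) with hf
    have hstep : ∀ t, t < W.length → f (t + 1) = f t + 1 ∨ f (t + 1) = f t - 1 := by
      intro t ht
      exact hT₁.height_adj _ _ (W.adj_getVert_succ ht).1
    -- first projection hits m₁
    let F₁ : (DLGraph G₁ G₂ h₁ h₂) →g G₁ := ⟨fun v => v.1.1, fun hadj => hadj.1⟩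
    let F₂ : (DLGraph G₁ G₂ h₁ h₂) →g G₂ := ⟨fun v => v.1.2, fun hadj => hadj.2⟩
    have hm1mem : m₁ ∈ (W.map F₁).support := hsup₁ (W.map F₁)
    have hm2mem : m₂ ∈ (W.map F₂).support := hsup₂ (W.map F₂)
    obtain ⟨s, hs1, hs2⟩ := SimpleGraph.Walk.mem_support_iff_exists_getVert.mp hm1mem
    obtain ⟨t, ht1, ht2⟩ := SimpleGraph.Walk.mem_support_iff_exists_getVert.mp hm2mem
    rw [DLProof.getVert_map] at hs1 ht1
    rw [SimpleGraph.Walk.length_map] at hs2 ht2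
    have hf0 : f 0 = h₁ a.1.1 := by rw [hf]; simp [SimpleGraph.Walk.getVert_zero]
    have hfn : f W.length = h₁ b.1.1 := by rw [hf]; simp [SimpleGraph.Walk.getVert_length]
    have hfs : f s = f 0 - a₁ := by
      have hgs : (W.getVert s).1.1 = m₁ := hs1
      show h₁ ((W.getVert s).1.1) = h₁ ((W.getVert 0)).1.1 - a₁
      rw [hgs, W.getVert_zero]; omega
    have hft : f t = f 0 + a₂ := by
      have hgt : (W.getVert t).1.2 = m₂ := ht1
      have h2m : h₂ ((W.getVert t).1.2) = h₂ a.1.2 - a₂ := by rw [hgt]; omega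
      have hsum := (W.getVert t).2
      show h₁ ((W.getVert t).1.1) = h₁ ((W.getVert 0)).1.1 + a₂
      rw [W.getVert_zero]; omega
    have := DLProof.key_lb f W.length hstep a₁ a₂ s t hs2 ht2 hfs hft
    rw [hfn, hf0, hΔ] at this
    exact this
  have hub2 : (DLGraph G₁ G₂ h₁ h₂).dist a b ≤ Wup.length := SimpleGraph.dist_le Wup
  obtain ⟨Wmin, hWmin⟩ :=
    (SimpleGraph.Reachable.exists_walk_length_eq_dist (⟨Wup⟩ :
      (DLGraph G₁ G₂ h₁ h₂).Reachable a b))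
  have hlb2 := hlb Wmin
  rw [hWmin] at hlb2
  rw [hd₁, hd₂, hΔ]
  have habs := abs_nonneg ((b₁ : ℤ) - a₁)
  rcases abs_cases ((b₁ : ℤ) - a₁) with ⟨he, _⟩ | ⟨he, _⟩ <;> rw [he] at hWup hlb2 ⊢ <;>
    push_cast at hWup hlb2 ⊢ <;> omega
end

section
/- In BS(2,4) = ⟨a, t | t a² t^{-1} = a⁴⟩, if an element h has word length at most m with respect to the generating set {a^{±1}, t^{±1}}, then the absolute value of its a-level is at most 2^{m−1}. -/
/-- The Baumslag--Solitar relation `t a^p t⁻¹ (a^q)⁻¹` in the free group on two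
generators (`0 ↦ a`, `1 ↦ t`). -/
def bsRel (p q : ℕ) : Set (FreeGroup (Fin 2)) :=
  {FreeGroup.of 1 * (FreeGroup.of 0) ^ p * (FreeGroup.of 1)⁻¹ * ((FreeGroup.of 0) ^ q)⁻¹}

/-- The Baumslag--Solitar group `BS(p,q) = ⟨a, t ∣ t a^p t⁻¹ = a^q⟩`. -/
abbrev BS (p q : ℕ) := PresentedGroup (bsRel p q)

/-- The affine action of the free group on two generators on `ℚ`:
`a` acts by `x ↦ x + 1` and `t` acts by `x ↦ 2x`. -/
noncomputable def affAction : FreeGroup (Fin 2) →* Equiv.Perm ℚ :=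
  FreeGroup.lift (fun i =>
    if i = 0 then Equiv.addRight (1 : ℚ) else Equiv.mulLeft₀ (2 : ℚ) (by norm_num))

/-- The `a`-level of a word `a^{i₁}t^{j₁}⋯a^{i_h}t^{j_h}`:
`i₁ + i₂·2^{j₁} + ⋯ + i_h·2^{j₁+⋯+j_{h−1}}`. -/
noncomputable def freeALevel (w : FreeGroup (Fin 2)) : ℚ := affAction w 0

lemma bsRel_lift : ∀ r ∈ bsRel 2 4, affAction r = 1 := by
  intro r hr
  simp only [bsRel, Set.mem_singleton_iff] at hr
  subst hr
  simp only [affAction, map_mul, map_inv, map_pow, FreeGroup.lift_apply_of]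
  ext x
  simp [Equiv.Perm.mul_apply, Equiv.mulLeft₀_apply, Equiv.Perm.inv_def,
    Equiv.mulLeft₀_symm_apply]
  field_simp
  ring

/-- The affine action descends to `BS(2,4)`. -/
noncomputable def rho : BS 2 4 →* Equiv.Perm ℚ := PresentedGroup.toGroup bsRel_lift

lemma rho_mk (w : FreeGroup (Fin 2)) :
    rho (PresentedGroup.mk (bsRel 2 4) w) = affAction w := rfl

lemma gen_cases {g : BS 2 4}
    (hg : g ∈ ({PresentedGroup.of 0, (PresentedGroup.of 0)⁻¹,
      PresentedGroup.of 1, (PresentedGroup.of 1)⁻¹} : Set (BS 2 4)))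
    (v : ℚ) :
    rho g v = v + 1 ∨ rho g v = v - 1 ∨ rho g v = 2 * v ∨ rho g v = v / 2 := by
  have h0 : rho (PresentedGroup.of (rels := bsRel 2 4) 0) = Equiv.addRight (1 : ℚ) := by
    rw [rho]; exact (PresentedGroup.toGroup.of (h := bsRel_lift) (x := 0)).trans (if_pos rfl)
  have h1 : rho (PresentedGroup.of (rels := bsRel 2 4) 1) =
      Equiv.mulLeft₀ (2 : ℚ) (by norm_num) := by
    rw [rho]; exact (PresentedGroup.toGroup.of (h := bsRel_lift) (x := 1)).trans (if_neg (by decide))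
  rcases hg with hg | hg | hg | hg <;> subst hg
  · left; rw [h0]; rfl
  · right; left
    rw [map_inv, h0, Equiv.Perm.inv_def]
    have : (Equiv.addRight (1:ℚ)).symm v = v - 1 := by
      rw [Equiv.symm_apply_eq]; simp
    simpa using this
  · right; right; left; rw [h1]; rfl
  · right; right; right
    rw [map_inv, h1, Equiv.Perm.inv_def]
    have : (Equiv.mulLeft₀ (2:ℚ) (by norm_num)).symm v = v / 2 := by
      rw [Equiv.mulLeft₀_symm_apply]; ring
    simpa using this

lemma gen_step {g : BS 2 4}
    (hg : g ∈ ({PresentedGroup.of 0, (PresentedGroup.of 0)⁻¹,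
      PresentedGroup.of 1, (PresentedGroup.of 1)⁻¹} : Set (BS 2 4)))
    (v : ℚ) {B : ℚ} (hB : 1 ≤ B) (hv : |v| ≤ B) : |rho g v| ≤ 2 * B := by
  have habs := abs_le.mp hv
  rcases gen_cases hg v with h | h | h | h <;> rw [h, abs_le] <;>
    constructor <;> nlinarith [habs.1, habs.2]

lemma gen_zero {g : BS 2 4}
    (hg : g ∈ ({PresentedGroup.of 0, (PresentedGroup.of 0)⁻¹,
      PresentedGroup.of 1, (PresentedGroup.of 1)⁻¹} : Set (BS 2 4))) :
    |rho g 0| ≤ 1 := by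
  rcases gen_cases hg 0 with h | h | h | h <;> rw [h] <;> norm_num

lemma list_bound (l : List (BS 2 4))
    (hl : ∀ x ∈ l, x ∈ ({PresentedGroup.of 0, (PresentedGroup.of 0)⁻¹,
      PresentedGroup.of 1, (PresentedGroup.of 1)⁻¹} : Set (BS 2 4)))
    (hne : l ≠ []) : |rho l.prod 0| ≤ 2 ^ (l.length - 1) := by
  induction l with
  | nil => exact absurd rfl hne
  | cons g t ih =>
    rcases eq_or_ne t [] with rfl | ht
    · simpa using gen_zero (hl g (by simp))
    · have hin := ih (fun x hx => hl x (List.mem_cons_of_mem _ hx)) ht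
      have hB : (1:ℚ) ≤ 2 ^ (t.length - 1) := one_le_pow₀ (by norm_num)
      have hstep := gen_step (hl g (by simp)) (rho t.prod 0) hB hin
      rw [List.prod_cons, map_mul, Equiv.Perm.mul_apply]
      calc |rho g (rho t.prod 0)| ≤ 2 * 2 ^ (t.length - 1) := hstep
        _ = 2 ^ (t.length - 1 + 1) := by ring
        _ = 2 ^ ((g :: t).length - 1) := by
            congr 1
            have : 1 ≤ t.length := List.length_pos_iff.mpr ht
            rw [List.length_cons]
            omega

/-- In `BS(2,4)`, if an element has word length at most `m` with respect to
`{a^{±1}, t^{±1}}`, then the absolute value of its `a`-level is at most `2^{m−1}`. -/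
theorem BS24_aLevel_bound (m : ℕ) (w : FreeGroup (Fin 2)) (l : List (BS 2 4))
    (hl : ∀ x ∈ l, x ∈ ({PresentedGroup.of 0, (PresentedGroup.of 0)⁻¹,
      PresentedGroup.of 1, (PresentedGroup.of 1)⁻¹} : Set (BS 2 4)))
    (hprod : l.prod = PresentedGroup.mk (bsRel 2 4) w)
    (hlen : l.length ≤ m) :
    |freeALevel w| ≤ 2 ^ (m - 1) := by
  have key : freeALevel w = rho l.prod 0 := by
    rw [hprod, rho_mk]; rfl
  rw [key]
  rcases eq_or_ne l [] with rfl | hne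
  · rw [List.prod_nil, map_one]
    simp only [Equiv.Perm.coe_one, id_eq, abs_zero]
    positivity
  · calc |rho l.prod 0| ≤ 2 ^ (l.length - 1) := list_bound l hl hne
      _ ≤ 2 ^ (m - 1) := by
          apply pow_le_pow_right₀ (by norm_num)
          omega
end

section
/- The wreath product of graphs B ≀ A, where A and B are connected vertex-transitive graphs, is itself vertex-transitive; moreover if A and B are locally finite then so is B ≀ A. -/
/-- The wreath product `B ≀ A` of graphs (Erschler): vertices are pairs `(f, a)` with
`f : V(A) → V(B)` finitely supported relative to `b₀` and `a ∈ V(A)`; edges of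
type (1) change the value of `f` at `a` along an edge of `B`, edges of type (2)
move `a` along an edge of `A`. -/
def graphWreath {α β : Type*} (A : SimpleGraph α) (B : SimpleGraph β) (b₀ : β) :
    SimpleGraph ({f : α → β // {x | f x ≠ b₀}.Finite} × α) where
  Adj u v :=
    (u.2 = v.2 ∧ (∀ x, x ≠ u.2 → u.1.1 x = v.1.1 x) ∧ B.Adj (u.1.1 u.2) (v.1.1 v.2)) ∨
    (u.1 = v.1 ∧ A.Adj u.2 v.2)
  symm := by
    constructor
    rintro ⟨f₁, a₁⟩ ⟨f₂, a₂⟩ (⟨h1, h2, h3⟩ | ⟨h1, h2⟩) <;> dsimp at *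
    · subst h1
      exact Or.inl ⟨rfl, fun x hx => (h2 x hx).symm, h3.symm⟩
    · subst h1
      exact Or.inr ⟨rfl, h2.symm⟩
  loopless := by
    constructor
    rintro ⟨f, a⟩ (⟨_, _, h3⟩ | ⟨_, h2⟩)
    · exact B.loopless.irrefl _ h3
    · exact A.loopless.irrefl _ h2

/-- A graph is vertex-transitive if its automorphism group acts transitively on
vertices. -/
def VertexTransitive {V : Type*} (G : SimpleGraph V) : Prop :=
  ∀ u v : V, ∃ e : G ≃g G, e u = v

namespace GraphWreathAux

variable {α β : Type*} {A : SimpleGraph α} {B : SimpleGraph β} {b₀ : β}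

/-- shift map from an equiv of `α`. -/
def shiftMap (σ : α ≃ α) (p : {f : α → β // {x | f x ≠ b₀}.Finite} × α) :
    {f : α → β // {x | f x ≠ b₀}.Finite} × α :=
  (⟨fun x => p.1.1 (σ.symm x),
    (p.1.2.image σ).subset (fun x hx => ⟨σ.symm x, hx, by simp⟩)⟩, σ p.2)

@[simp] lemma shiftMap_fst_val (σ : α ≃ α) (p : {f : α → β // {x | f x ≠ b₀}.Finite} × α)
    (x : α) : ((shiftMap σ p).1 : α → β) x = p.1.1 (σ.symm x) := rfl

@[simp] lemma shiftMap_snd (σ : α ≃ α) (p : {f : α → β // {x | f x ≠ b₀}.Finite} × α) :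
    (shiftMap σ p).2 = σ p.2 := rfl

lemma shiftMap_cancel (σ : A ≃g A) (p : {f : α → β // {x | f x ≠ b₀}.Finite} × α) :
    shiftMap σ.symm.toEquiv (shiftMap (b₀ := b₀) σ.toEquiv p) = p := by
  refine Prod.ext (Subtype.ext (funext fun x => ?_)) ?_
  · show p.1.1 (σ.toEquiv.symm (σ.toEquiv x)) = p.1.1 x
    rw [Equiv.symm_apply_apply]
  · show σ.toEquiv.symm (σ.toEquiv p.2) = p.2
    rw [Equiv.symm_apply_apply]

lemma shiftMap_cancel' (σ : A ≃g A) (p : {f : α → β // {x | f x ≠ b₀}.Finite} × α) :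
    shiftMap σ.toEquiv (shiftMap (b₀ := b₀) σ.symm.toEquiv p) = p := by
  refine Prod.ext (Subtype.ext (funext fun x => ?_)) ?_
  · show p.1.1 (σ.toEquiv (σ.toEquiv.symm x)) = p.1.1 x
    rw [Equiv.apply_symm_apply]
  · show σ.toEquiv (σ.toEquiv.symm p.2) = p.2
    rw [Equiv.apply_symm_apply]

lemma shiftMap_adj (σ : A ≃g A) (u v : {f : α → β // {x | f x ≠ b₀}.Finite} × α)
    (h : (graphWreath A B b₀).Adj u v) :
    (graphWreath A B b₀).Adj (shiftMap σ.toEquiv u) (shiftMap σ.toEquiv v) := by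
  rcases h with ⟨h1, h2, h3⟩ | ⟨h1, h2⟩
  · left
    refine ⟨by simp [h1], fun x hx => ?_, ?_⟩
    · refine h2 (σ.toEquiv.symm x) (fun he => hx ?_)
      simp [← he]
    · simp only [shiftMap_fst_val, shiftMap_snd, Equiv.symm_apply_apply]
      rw [h1] at h3 ⊢
      exact h3
  · right
    refine ⟨Subtype.ext (funext fun x => ?_), σ.map_rel_iff.mpr h2⟩
    show u.1.1 _ = v.1.1 _
    rw [h1]

/-- the graph iso induced by an automorphism of `A`. -/
def shiftIso (σ : A ≃g A) : graphWreath A B b₀ ≃g graphWreath A B b₀ where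
  toFun := shiftMap σ.toEquiv
  invFun := shiftMap σ.symm.toEquiv
  left_inv := shiftMap_cancel σ
  right_inv := shiftMap_cancel' σ
  map_rel_iff' := by
    intro u v
    constructor
    · intro h
      have h' : (graphWreath A B b₀).Adj (shiftMap σ.toEquiv u) (shiftMap σ.toEquiv v) := h
      have := shiftMap_adj σ.symm _ _ h'
      rwa [shiftMap_cancel, shiftMap_cancel] at this
    · exact shiftMap_adj σ u v

/-- pointwise map from a family of equivs of `β`. -/
def ptMap (e : α → β ≃ β) (he : {x | e x b₀ ≠ b₀}.Finite)
    (p : {f : α → β // {x | f x ≠ b₀}.Finite} × α) :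
    {f : α → β // {x | f x ≠ b₀}.Finite} × α :=
  (⟨fun x => e x (p.1.1 x),
    (p.1.2.union he).subset (fun x hx => by
      by_cases h : p.1.1 x = b₀
      · right; simpa [h] using hx
      · left; exact h)⟩, p.2)

@[simp] lemma ptMap_fst_val (e : α → β ≃ β) (he : {x | e x b₀ ≠ b₀}.Finite)
    (p : {f : α → β // {x | f x ≠ b₀}.Finite} × α) (x : α) :
    ((ptMap e he p).1 : α → β) x = e x (p.1.1 x) := rfl

@[simp] lemma ptMap_snd (e : α → β ≃ β) (he : {x | e x b₀ ≠ b₀}.Finite)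
    (p : {f : α → β // {x | f x ≠ b₀}.Finite} × α) : (ptMap e he p).2 = p.2 := rfl

lemma symm_fin (e : α → β ≃ β) (he : {x | e x b₀ ≠ b₀}.Finite) :
    {x | (e x).symm b₀ ≠ b₀}.Finite := by
  refine he.subset (fun x hx => ?_)
  simp only [Set.mem_setOf_eq] at hx ⊢
  intro hc
  exact hx ((Equiv.symm_apply_eq _).mpr hc.symm)

lemma ptMap_cancel (e : α → β ≃ β) (he : {x | e x b₀ ≠ b₀}.Finite)
    (p : {f : α → β // {x | f x ≠ b₀}.Finite} × α) :
    ptMap (fun x => (e x).symm) (symm_fin e he) (ptMap e he p) = p := by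
  refine Prod.ext (Subtype.ext (funext fun x => ?_)) rfl
  simp

lemma ptMap_cancel' (e : α → β ≃ β) (he : {x | e x b₀ ≠ b₀}.Finite)
    (p : {f : α → β // {x | f x ≠ b₀}.Finite} × α) :
    ptMap e he (ptMap (fun x => (e x).symm) (symm_fin e he) p) = p := by
  refine Prod.ext (Subtype.ext (funext fun x => ?_)) rfl
  simp

lemma ptMap_adj (e : α → B ≃g B) (he : {x | (e x).toEquiv b₀ ≠ b₀}.Finite)
    (u v : {f : α → β // {x | f x ≠ b₀}.Finite} × α)
    (h : (graphWreath A B b₀).Adj u v) :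
    (graphWreath A B b₀).Adj (ptMap (fun x => (e x).toEquiv) he u)
      (ptMap (fun x => (e x).toEquiv) he v) := by
  rcases h with ⟨h1, h2, h3⟩ | ⟨h1, h2⟩
  · left
    refine ⟨h1, fun x hx => ?_, ?_⟩
    · simp only [ptMap_snd] at hx
      simp only [ptMap_fst_val]
      rw [h2 x hx]
    · simp only [ptMap_fst_val, ptMap_snd]
      rw [← h1] at h3 ⊢
      exact (e u.2).map_rel_iff.mpr h3
  · right
    refine ⟨Subtype.ext (funext fun x => ?_), h2⟩
    show (e x).toEquiv (u.1.1 x) = (e x).toEquiv (v.1.1 x)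
    rw [show u.1 = v.1 from h1]

/-- the graph iso induced by a finitely-supported family of automorphisms of `B`. -/
def ptIso (e : α → B ≃g B) (he : {x | (e x).toEquiv b₀ ≠ b₀}.Finite) :
    graphWreath A B b₀ ≃g graphWreath A B b₀ where
  toFun := ptMap (fun x => (e x).toEquiv) he
  invFun := ptMap (fun x => ((e x).toEquiv).symm) (symm_fin _ he)
  left_inv := ptMap_cancel _ he
  right_inv := ptMap_cancel' _ he
  map_rel_iff' := by
    intro u v
    constructor
    · intro h
      have h' : (graphWreath A B b₀).Adj (ptMap (fun x => (e x).toEquiv) he u)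
          (ptMap (fun x => (e x).toEquiv) he v) := h
      have this' : (graphWreath A B b₀).Adj
          (ptMap (fun x => ((e x).toEquiv).symm) (symm_fin _ he)
            (ptMap (fun x => (e x).toEquiv) he u))
          (ptMap (fun x => ((e x).toEquiv).symm) (symm_fin _ he)
            (ptMap (fun x => (e x).toEquiv) he v)) :=
        ptMap_adj (fun x => (e x).symm) (symm_fin _ he) _ _ h'
      rwa [ptMap_cancel, ptMap_cancel] at this'
    · exact ptMap_adj e he u v

end GraphWreathAux

open GraphWreathAux in
/-- If `A` and `B` are connected vertex-transitive graphs, then `B ≀ A` is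
vertex-transitive; moreover if `A` and `B` are locally finite then so is `B ≀ A`. -/
theorem graphWreath_vertexTransitive_and_locallyFinite {α β : Type*}
    (A : SimpleGraph α) (B : SimpleGraph β) (b₀ : β)
    (hAconn : A.Connected) (hBconn : B.Connected)
    (hA : VertexTransitive A) (hB : VertexTransitive B) :
    VertexTransitive (graphWreath A B b₀) ∧
    ((∀ a, (A.neighborSet a).Finite) → (∀ b, (B.neighborSet b).Finite) →
      ∀ v, ((graphWreath A B b₀).neighborSet v).Finite) := by
  classical
  constructor
  · intro u v
    obtain ⟨σ, hσ⟩ := hA u.2 v.2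
    set u' := shiftMap (b₀ := b₀) σ.toEquiv u with hu'
    have hu2 : u'.2 = v.2 := hσ
    choose g hg using hB
    let e : α → B ≃g B := fun x =>
      if h : u'.1.1 x = v.1.1 x then (SimpleGraph.Iso.refl : B ≃g B) else g (u'.1.1 x) (v.1.1 x)
    have he : {x | (e x).toEquiv b₀ ≠ b₀}.Finite := by
      refine (u'.1.2.union v.1.2).subset (fun x hx => ?_)
      by_contra hc
      simp only [Set.mem_union, Set.mem_setOf_eq, not_or, not_not] at hc
      obtain ⟨hc1, hc2⟩ := hc
      have hx' : u'.1.1 x = v.1.1 x := by rw [hc1, hc2]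
      simp only [Set.mem_setOf_eq, e, dif_pos hx'] at hx
      exact hx rfl
    refine ⟨(shiftIso σ).trans (ptIso e he), ?_⟩
    show ptMap (fun x => (e x).toEquiv) he (shiftMap σ.toEquiv u) = v
    refine Prod.ext (Subtype.ext (funext fun x => ?_)) hu2
    show (e x).toEquiv (u'.1.1 x) = v.1.1 x
    by_cases h : u'.1.1 x = v.1.1 x
    · simp only [e, dif_pos h]
      exact h
    · simp only [e, dif_neg h]
      exact hg _ _
  · intro hAf hBf v
    obtain ⟨f, a⟩ := v
    have hsub : (graphWreath A B b₀).neighborSet (f, a) ⊆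
        (fun b : β => ((⟨Function.update f.1 a b,
          (f.2.union (Set.finite_singleton a)).subset (fun x hx => by
            by_cases h : x = a
            · right; simp [h]
            · left
              simp only [Set.mem_setOf_eq, Function.update_of_ne h] at hx
              exact hx)⟩ :
            {h : α → β // {x | h x ≠ b₀}.Finite}), a)) '' (B.neighborSet (f.1 a)) ∪
        (fun a' : α => ((f : {h : α → β // {x | h x ≠ b₀}.Finite}), a')) ''
          (A.neighborSet a) := by
      rintro ⟨g, c⟩ (⟨h1, h2, h3⟩ | ⟨h1, h2⟩)
      · left
        have h1' : a = c := h1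
        have h2' : ∀ x, x ≠ a → f.1 x = g.1 x := h2
        have h3' : B.Adj (f.1 a) (g.1 c) := h3
        refine ⟨g.1 c, h3', ?_⟩
        refine Prod.ext (Subtype.ext (funext fun x => ?_)) h1'
        show Function.update (f.1) a (g.1 c) x = g.1 x
        by_cases hxa : x = a
        · subst hxa
          rw [Function.update_self, ← h1']
        · rw [Function.update_of_ne hxa]
          exact h2' x hxa
      · right
        have h1' : f = g := h1
        have h2' : A.Adj a c := h2
        exact ⟨c, h2', Prod.ext h1' rfl⟩
    exact (((hBf _).image _).union ((hAf _).image _)).subset hsub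
end
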